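/- Define F(θ) = (θ + σ sin θ)/sqrt(θ - sin θ cos θ) for θ ∈ (0, π) and σ ∈ (-1, 1). Then F attains a strict local minimum at the unique θ₀ ∈ (0, π) with cos θ₀ = -σ. -/

import Mathlib

open Real Set

/-- Algebraic identity behind the derivative factorization. -/
lemma capillarity_aux (θ σ s c : ℝ) (h : s ^ 2 + c ^ 2 = 1) :
    2 * (θ + σ * s) * (1 + σ * c) * (θ - s * c)
      - (θ + σ * s) ^ 2 * (1 - (c * c + s * -s))
      = (θ + σ * s) * (2 * (θ * c - s) * (c + σ)) := by
  linear_combination (-(θ + σ * s) ^ 2) * h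

theorem capillarity_energy_strict_local_min (σ : ℝ) (hσ : σ ∈ Ioo (-1 : ℝ) 1)
    (F : ℝ → ℝ)
    (hF : ∀ θ, F θ = (θ + σ * Real.sin θ) / Real.sqrt (θ - Real.sin θ * Real.cos θ)) :
    ∃ θ₀ ∈ Ioo (0 : ℝ) π, Real.cos θ₀ = -σ ∧
      (∀ θ ∈ Ioo (0 : ℝ) π, Real.cos θ = -σ → θ = θ₀) ∧
      (∀ᶠ θ in nhdsWithin θ₀ {θ₀}ᶜ, F θ₀ < F θ) := by
  obtain ⟨hσ1, hσ2⟩ := hσ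
  set θ₀ := Real.arccos (-σ) with hθ₀def
  have hθ₀pos : 0 < θ₀ := Real.arccos_pos.2 (by linarith)
  have hθ₀lt : θ₀ < π :=
    lt_of_le_of_ne (Real.arccos_le_pi _) (fun h => by
      have := Real.arccos_eq_pi.1 h; linarith)
  have hcos : Real.cos θ₀ = -σ := Real.cos_arccos (by linarith) (by linarith)
  -- basic positivity facts on (0, π)
  have hNpos : ∀ θ ∈ Ioo (0 : ℝ) π, 0 < θ + σ * Real.sin θ := by
    intro θ hθ
    have hs : 0 < Real.sin θ := Real.sin_pos_of_pos_of_lt_pi hθ.1 hθ.2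
    have hsθ : Real.sin θ < θ := Real.sin_lt hθ.1
    nlinarith
  have hgpos : ∀ θ ∈ Ioo (0 : ℝ) π, 0 < θ - Real.sin θ * Real.cos θ := by
    intro θ hθ
    have hs : 0 < Real.sin θ := Real.sin_pos_of_pos_of_lt_pi hθ.1 hθ.2
    have hsθ : Real.sin θ < θ := Real.sin_lt hθ.1
    rcases le_or_gt (Real.cos θ) 0 with hc | hc
    · nlinarith
    · nlinarith [Real.cos_le_one θ]
  have hkey : ∀ θ ∈ Ioo (0 : ℝ) π, θ * Real.cos θ - Real.sin θ < 0 := by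
    intro θ hθ
    have hs : 0 < Real.sin θ := Real.sin_pos_of_pos_of_lt_pi hθ.1 hθ.2
    rcases le_or_gt (Real.cos θ) 0 with hc | hc
    · nlinarith [mul_nonpos_of_nonneg_of_nonpos hθ.1.le hc]
    · have hlt : θ < π / 2 := by
        by_contra hcon
        push_neg at hcon
        have : Real.cos θ ≤ 0 :=
          Real.cos_nonpos_of_pi_div_two_le_of_le hcon (by linarith [Real.pi_pos, hθ.2])
        linarith
      have := Real.lt_tan hθ.1 hlt
      rw [Real.tan_eq_sin_div_cos] at this
      have := (lt_div_iff₀ hc).1 this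
      linarith
  -- the squared energy function
  set G : ℝ → ℝ := fun θ => (θ + σ * Real.sin θ) ^ 2 / (θ - Real.sin θ * Real.cos θ)
    with hGdef
  have hGderiv : ∀ θ ∈ Ioo (0 : ℝ) π, HasDerivAt G
      ((θ + σ * Real.sin θ) * (2 * (θ * Real.cos θ - Real.sin θ) * (Real.cos θ + σ)) /
        (θ - Real.sin θ * Real.cos θ) ^ 2) θ := by
    intro θ hθ
    have hg := hgpos θ hθ
    have hN : HasDerivAt (fun x : ℝ => x + σ * Real.sin x) (1 + σ * Real.cos θ) θ :=
      (hasDerivAt_id θ).add ((Real.hasDerivAt_sin θ).const_mul σ)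
    have hN2 : HasDerivAt (fun x : ℝ => (x + σ * Real.sin x) ^ 2)
        (2 * (θ + σ * Real.sin θ) * (1 + σ * Real.cos θ)) θ := by
      have := hN.fun_pow 2
      simpa [pow_one, mul_comm, mul_assoc, mul_left_comm] using this
    have hgd : HasDerivAt (fun x : ℝ => x - Real.sin x * Real.cos x)
        (1 - (Real.cos θ * Real.cos θ + Real.sin θ * -Real.sin θ)) θ :=
      (hasDerivAt_id θ).sub ((Real.hasDerivAt_sin θ).mul (Real.hasDerivAt_cos θ))
    have hD := hN2.fun_div hgd (ne_of_gt hg)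
    have heq := capillarity_aux θ σ (Real.sin θ) (Real.cos θ) (Real.sin_sq_add_cos_sq θ)
    rw [hGdef]
    rw [← heq]
    exact hD
  -- strict monotonicity on each side of θ₀
  have hanti : StrictAntiOn G (Ioc 0 θ₀) := by
    apply strictAntiOn_of_deriv_neg (convex_Ioc 0 θ₀)
    · intro x hx
      exact ((hGderiv x ⟨hx.1, lt_of_le_of_lt hx.2 hθ₀lt⟩).continuousAt).continuousWithinAt
    · intro x hx
      rw [interior_Ioc] at hx
      have hxm : x ∈ Ioo (0 : ℝ) π := ⟨hx.1, hx.2.trans hθ₀lt⟩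
      rw [(hGderiv x hxm).deriv]
      have h1 := hNpos x hxm
      have h2 := hgpos x hxm
      have h3 := hkey x hxm
      have h4 : 0 < Real.cos x + σ := by
        have hlt : Real.cos θ₀ < Real.cos x :=
          Real.strictAntiOn_cos ⟨hxm.1.le, hxm.2.le⟩ ⟨hθ₀pos.le, hθ₀lt.le⟩ hx.2
        rw [hcos] at hlt; linarith
      apply div_neg_of_neg_of_pos
      · exact mul_neg_of_pos_of_neg h1 (mul_neg_of_neg_of_pos (by linarith) h4)
      · positivity
  have hmono : StrictMonoOn G (Ico θ₀ π) := by
    apply strictMonoOn_of_deriv_pos (convex_Ico θ₀ π)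
    · intro x hx
      exact ((hGderiv x ⟨lt_of_lt_of_le hθ₀pos hx.1, hx.2⟩).continuousAt).continuousWithinAt
    · intro x hx
      rw [interior_Ico] at hx
      have hxm : x ∈ Ioo (0 : ℝ) π := ⟨hθ₀pos.trans hx.1, hx.2⟩
      rw [(hGderiv x hxm).deriv]
      have h1 := hNpos x hxm
      have h2 := hgpos x hxm
      have h3 := hkey x hxm
      have h4 : Real.cos x + σ < 0 := by
        have hlt : Real.cos x < Real.cos θ₀ :=
          Real.strictAntiOn_cos ⟨hθ₀pos.le, hθ₀lt.le⟩ ⟨hxm.1.le, hxm.2.le⟩ hx.1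
        rw [hcos] at hlt; linarith
      apply div_pos
      · exact mul_pos h1 (mul_pos_of_neg_of_neg (by linarith) h4)
      · positivity
  -- F = sqrt ∘ G on (0, π)
  have hFG : ∀ θ ∈ Ioo (0 : ℝ) π, F θ = Real.sqrt (G θ) := by
    intro θ hθ
    rw [hF, hGdef]
    simp only
    rw [Real.sqrt_div (sq_nonneg _), Real.sqrt_sq (hNpos θ hθ).le]
  refine ⟨θ₀, ⟨hθ₀pos, hθ₀lt⟩, hcos, ?_, ?_⟩
  · intro θ hθ hc
    exact Real.injOn_cos ⟨hθ.1.le, hθ.2.le⟩ ⟨hθ₀pos.le, hθ₀lt.le⟩ (by rw [hc, hcos])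
  · have hIoo : ∀ᶠ θ in nhdsWithin θ₀ {θ₀}ᶜ, θ ∈ Ioo (0 : ℝ) π :=
      mem_nhdsWithin_of_mem_nhds (Ioo_mem_nhds hθ₀pos hθ₀lt)
    filter_upwards [hIoo, self_mem_nhdsWithin] with θ hθ hne
    have hne' : θ ≠ θ₀ := hne
    have hGlt : G θ₀ < G θ := by
      rcases lt_or_gt_of_ne hne' with h | h
      · exact hanti ⟨hθ.1, h.le⟩ ⟨hθ₀pos, le_refl _⟩ h
      · exact hmono ⟨le_refl _, hθ₀lt⟩ ⟨h.le, hθ.2⟩ h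
    rw [hFG θ₀ ⟨hθ₀pos, hθ₀lt⟩, hFG θ hθ]
    exact Real.sqrt_lt_sqrt
      (div_nonneg (sq_nonneg _) (hgpos θ₀ ⟨hθ₀pos, hθ₀lt⟩).le) hGlt
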